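/- Let z be an irrational real number whose continued fraction partial quotients a_n are bounded, i.e. there is K ∈ ℕ with a_n ≤ K for all n ≥ 1. Then for every α with 0 < α < 1, lim_{N→∞} N^α · sup_{x ∈ [0,1)} min_{1 ≤ n ≤ N} ‖x − n z‖ = 0, where ‖·‖ denotes the distance to the nearest integer. -/

import Mathlib

open scoped Classical

/-- Distance from `x` to the nearest integer. -/
noncomputable def nint (x : ℝ) : ℝ := ⨅ k : ℤ, |x - (k : ℝ)|

/-- Iterated fractional parts of the continued fraction (Gauss map) algorithm:
`cfX z 0 = {z}`, `cfX z (n+1) = {1 / cfX z n}`. -/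
noncomputable def cfX (z : ℝ) : ℕ → ℝ
  | 0 => Int.fract z
  | n + 1 => Int.fract (1 / cfX z n)

/-- Partial quotients of the continued fraction expansion `z = [a₀; a₁, a₂, …]`:
`cfA z n = aₙ` for `n ≥ 1` (the value at `0` is a dummy). -/
noncomputable def cfA (z : ℝ) : ℕ → ℕ
  | 0 => 0
  | n + 1 => ⌊1 / cfX z n⌋₊

lemma nint_nonneg (x : ℝ) : 0 ≤ nint x :=
  Real.iInf_nonneg fun _ => abs_nonneg _

lemma nint_le (x : ℝ) (k : ℤ) : nint x ≤ |x - k| :=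
  ciInf_le ⟨0, by rintro y ⟨k, rfl⟩; exact abs_nonneg _⟩ k

lemma cfX_mem (z : ℝ) (hz : Irrational z) :
    ∀ n, Irrational (cfX z n) ∧ 0 < cfX z n ∧ cfX z n < 1 := by
  have frac : ∀ x : ℝ, Irrational x →
      Irrational (Int.fract x) ∧ 0 < Int.fract x ∧ Int.fract x < 1 := by
    intro x hx
    have hirr : Irrational (Int.fract x) := by
      simpa [← Int.self_sub_floor] using hx.sub_intCast ⌊x⌋
    refine ⟨hirr, lt_of_le_of_ne (Int.fract_nonneg x) ?_, Int.fract_lt_one x⟩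
    intro h
    exact hirr.ne_rat 0 (by simp [← h])
  intro n
  induction n with
  | zero => exact frac z hz
  | succ n ih =>
    have h1 : Irrational (1 / cfX z n) := by
      simpa [one_div] using ih.1.inv
    exact frac _ h1

lemma cfA_key (z : ℝ) (hz : Irrational z) (n : ℕ) :
    1 / cfX z n = (cfA z (n + 1) : ℝ) + cfX z (n + 1) := by
  obtain ⟨h1, h2, h3⟩ := cfX_mem z hz n
  have hpos : 0 < 1 / cfX z n := by positivity
  have : (cfA z (n + 1) : ℝ) = (⌊1 / cfX z n⌋ : ℤ) := by
    rw [show cfA z (n+1) = ⌊1 / cfX z n⌋₊ from rfl]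
    exact_mod_cast congrArg (fun t : ℤ => (t : ℝ))
      (Int.natCast_floor_eq_floor hpos.le)
  rw [show cfX z (n+1) = Int.fract (1 / cfX z n) from rfl, this, Int.fract]
  ring

lemma cfA_one_le (z : ℝ) (hz : Irrational z) (n : ℕ) : 1 ≤ cfA z (n + 1) := by
  obtain ⟨h1, h2, h3⟩ := cfX_mem z hz n
  have : (1 : ℝ) < 1 / cfX z n := one_lt_one_div h2 h3
  exact Nat.le_floor (by exact_mod_cast this.le)

noncomputable def qd (z : ℝ) : ℕ → ℤ
  | 0 => 0
  | 1 => 1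
  | n + 2 => (cfA z (n + 1) : ℤ) * qd z (n + 1) + qd z n

noncomputable def pd (z : ℝ) : ℕ → ℤ
  | 0 => 1
  | 1 => ⌊z⌋
  | n + 2 => (cfA z (n + 1) : ℤ) * pd z (n + 1) + pd z n

noncomputable def Bd (z : ℝ) : ℕ → ℝ
  | 0 => 1
  | n + 1 => cfX z n * Bd z n

lemma Bd_pos (z : ℝ) (hz : Irrational z) : ∀ n, 0 < Bd z n
  | 0 => one_pos
  | n + 1 => mul_pos (cfX_mem z hz n).2.1 (Bd_pos z hz n)

lemma Bd_rec (z : ℝ) (hz : Irrational z) (n : ℕ) :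
    Bd z (n + 2) = Bd z n - (cfA z (n + 1) : ℝ) * Bd z (n + 1) := by
  have hx := (cfX_mem z hz n).2.1
  have key := cfA_key z hz n
  have h1 : cfX z n * (1 / cfX z n) = 1 := by field_simp
  show cfX z (n+1) * (cfX z n * Bd z n) = Bd z n - _ * (cfX z n * Bd z n)
  have : cfX z (n+1) * cfX z n = 1 - (cfA z (n+1) : ℝ) * cfX z n := by
    rw [key] at h1; ring_nf; ring_nf at h1; linarith
  nlinarith [this, Bd_pos z hz n]

lemma qd_facts (z : ℝ) (hz : Irrational z) : ∀ n, 0 ≤ qd z n ∧ 1 ≤ qd z (n + 1)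
  | 0 => by simp [qd]
  | n + 1 => by
    obtain ⟨h0, h1⟩ := qd_facts z hz n
    have ha : (1 : ℤ) ≤ (cfA z (n + 1) : ℤ) := by exact_mod_cast cfA_one_le z hz n
    refine ⟨le_trans zero_le_one h1, ?_⟩
    show 1 ≤ (cfA z (n + 1) : ℤ) * qd z (n + 1) + qd z n
    nlinarith

lemma qd_le_succ (z : ℝ) (hz : Irrational z) : ∀ n, qd z n ≤ qd z (n + 1)
  | 0 => by simp [qd]
  | n + 1 => by
    obtain ⟨h0, h1⟩ := qd_facts z hz n
    have ha : (1 : ℤ) ≤ (cfA z (n + 1) : ℤ) := by exact_mod_cast cfA_one_le z hz n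
    show qd z (n + 1) ≤ (cfA z (n + 1) : ℤ) * qd z (n + 1) + qd z n
    nlinarith

lemma qd_lb (z : ℝ) (hz : Irrational z) : ∀ n : ℕ, (n : ℤ) ≤ qd z (n + 1) := by
  intro n
  induction n with
  | zero => simp [qd]
  | succ n ih =>
    have h1 := (qd_facts z hz n).2
    have ha : (1 : ℤ) ≤ (cfA z (n + 1) : ℤ) := by exact_mod_cast cfA_one_le z hz n
    have hq1 := (qd_facts z hz n).1
    have goal : ((n : ℤ) + 1) ≤ (cfA z (n + 1) : ℤ) * qd z (n + 1) + qd z n := by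
      cases n with
      | zero => simpa [qd] using ha
      | succ m =>
        have := (qd_facts z hz m).2
        push_cast at ih ⊢
        nlinarith
    show ((n + 1 : ℕ) : ℤ) ≤ qd z (n + 2)
    push_cast
    exact goal

lemma C1 (z : ℝ) (hz : Irrational z) :
    ∀ n, (qd z n : ℝ) * z - (pd z n : ℝ) = (-1 : ℝ) ^ (n + 1) * Bd z n
  | 0 => by simp [qd, pd, Bd]
  | 1 => by simp [qd, pd, Bd, cfX, ← Int.self_sub_floor]
  | n + 2 => by
    have h1 := C1 z hz n
    have h2 := C1 z hz (n + 1)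
    have hB := Bd_rec z hz n
    have e2 : (-1 : ℝ) ^ (n + 2) = -(-1 : ℝ) ^ (n + 1) := by rw [pow_succ]; ring
    have e3 : (-1 : ℝ) ^ (n + 3) = (-1 : ℝ) ^ (n + 1) := by
      rw [show n + 3 = (n + 1) + 2 from rfl, pow_add]; ring
    show ((((cfA z (n + 1) : ℤ) * qd z (n + 1) + qd z n : ℤ)) : ℝ) * z
        - (((cfA z (n + 1) : ℤ) * pd z (n + 1) + pd z n : ℤ) : ℝ)
        = (-1 : ℝ) ^ (n + 3) * Bd z (n + 2)
    push_cast
    rw [hB, e3]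
    rw [show n + 1 + 1 = n + 2 from rfl, e2] at h2
    linear_combination (cfA z (n + 1) : ℝ) * h2 + h1

lemma C2 (z : ℝ) (hz : Irrational z) :
    ∀ n, (qd z (n + 1) : ℝ) * Bd z n + (qd z n : ℝ) * Bd z (n + 1) = 1
  | 0 => by simp [qd, Bd]
  | n + 1 => by
    have ih := C2 z hz n
    have hB := Bd_rec z hz n
    show (((cfA z (n + 1) : ℤ) * qd z (n + 1) + qd z n : ℤ) : ℝ) * Bd z (n + 1)
        + (qd z (n + 1) : ℝ) * Bd z (n + 2) = 1
    push_cast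
    rw [hB]
    linear_combination ih

lemma C3 (z : ℝ) (hz : Irrational z) :
    ∀ n, qd z (n + 1) * pd z n - pd z (n + 1) * qd z n = (-1 : ℤ) ^ n
  | 0 => by simp [qd, pd]
  | n + 1 => by
    have ih := C3 z hz n
    show ((cfA z (n + 1) : ℤ) * qd z (n + 1) + qd z n) * pd z (n + 1)
        - ((cfA z (n + 1) : ℤ) * pd z (n + 1) + pd z n) * qd z (n + 1)
        = (-1 : ℤ) ^ (n + 1)
    rw [pow_succ]
    linear_combination (-1 : ℤ) * ih

lemma qdR_pos (z : ℝ) (hz : Irrational z) (n : ℕ) : (0 : ℝ) < (qd z (n + 1) : ℝ) := by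
  exact_mod_cast lt_of_lt_of_le zero_lt_one (qd_facts z hz n).2

lemma Bd_le (z : ℝ) (hz : Irrational z) (n : ℕ) :
    Bd z (n + 1) ≤ 1 / (qd z (n + 1) : ℝ) := by
  have h := C2 z hz (n + 1)
  have h1 : (0 : ℝ) ≤ (qd z (n + 1) : ℝ) * Bd z (n + 2) := by
    have := (qd_facts z hz n).2
    have := Bd_pos z hz (n + 2)
    positivity
  have hm : (qd z (n + 1) : ℝ) ≤ (qd z (n + 2) : ℝ) := by
    exact_mod_cast qd_le_succ z hz (n + 1)
  have hq := qdR_pos z hz n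
  rw [le_div_iff₀ hq]
  nlinarith [Bd_pos z hz (n + 1)]

lemma abs_eps (z : ℝ) (hz : Irrational z) (n : ℕ) :
    |(qd z (n + 1) : ℝ) * z - (pd z (n + 1) : ℝ)| = Bd z (n + 1) := by
  rw [C1 z hz (n + 1), abs_mul, abs_pow, abs_neg, abs_one, one_pow, one_mul,
    abs_of_pos (Bd_pos z hz (n + 1))]

lemma exists_inv (z : ℝ) (hz : Irrational z) (n : ℕ) :
    ∃ v u : ℤ, v * pd z (n + 1) + u * qd z (n + 1) = 1 := by
  have h := C3 z hz n
  rcases Nat.even_or_odd n with he | ho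
  · rw [he.neg_one_pow] at h
    exact ⟨-qd z n, pd z n, by linarith⟩
  · rw [ho.neg_one_pow] at h
    exact ⟨qd z n, -pd z n, by linarith⟩

lemma density (z : ℝ) (hz : Irrational z) (n : ℕ) (x : ℝ) :
    ∃ m : ℕ, 1 ≤ m ∧ (m : ℤ) ≤ qd z (n + 1) ∧
      nint (x - (m : ℝ) * z) ≤ 1 / (2 * (qd z (n + 1) : ℝ)) + Bd z (n + 1) := by
  set q : ℤ := qd z (n + 1) with hqdef
  set p : ℤ := pd z (n + 1) with hpdef
  have hq1 : 1 ≤ q := (qd_facts z hz n).2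
  have hq0 : (0 : ℝ) < (q : ℝ) := by exact_mod_cast lt_of_lt_of_le zero_lt_one hq1
  set ε : ℝ := (q : ℝ) * z - (p : ℝ) with hεdef
  have hε : |ε| = Bd z (n + 1) := abs_eps z hz n
  set j : ℤ := round ((q : ℝ) * x) with hjdef
  have hj : |(q : ℝ) * x - (j : ℝ)| ≤ 1 / 2 := abs_sub_round _
  obtain ⟨v, u, huv⟩ := exists_inv z hz n
  set m0 : ℤ := (j * v) % q with hm0def
  have hm0a : 0 ≤ m0 := Int.emod_nonneg _ (by omega)
  have hm0b : m0 < q := Int.emod_lt_of_pos _ (by omega)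
  set mZ : ℤ := if m0 = 0 then q else m0 with hmZdef
  have hmZ1 : 1 ≤ mZ := by by_cases h : m0 = 0 <;> simp [hmZdef, h] <;> omega
  have hmZq : mZ ≤ q := by by_cases h : m0 = 0 <;> simp [hmZdef, h] <;> omega
  have hdvd1 : q ∣ mZ - j * v := by
    have h2 : q ∣ j * v - m0 := Int.dvd_self_sub_of_emod_eq rfl
    by_cases h : m0 = 0
    · have h3 : q ∣ j * v := by simpa [h] using h2
      rw [hmZdef, if_pos h]
      exact dvd_sub (dvd_refl q) h3
    · rw [hmZdef, if_neg h, ← neg_sub (j * v) m0]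
      exact dvd_neg.mpr h2
  have hdvd : q ∣ mZ * p - j := by
    have key : mZ * p - j = (mZ - j * v) * p - j * u * q := by
      have hvp : v * p = 1 - u * q := by linarith
      calc mZ * p - j = (mZ - j * v) * p + j * (v * p) - j := by ring
        _ = (mZ - j * v) * p + j * (1 - u * q) - j := by rw [hvp]
        _ = (mZ - j * v) * p - j * u * q := by ring
    rw [key]
    exact dvd_sub (Dvd.dvd.mul_right hdvd1 p) (Dvd.dvd.mul_left (dvd_refl q) _)
  obtain ⟨t, ht⟩ := hdvd
  refine ⟨mZ.toNat, by omega, by omega, ?_⟩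
  have hmcast : ((mZ.toNat : ℕ) : ℝ) = (mZ : ℝ) := by
    have h4 : ((mZ.toNat : ℤ)) = mZ := Int.toNat_of_nonneg (by omega)
    exact_mod_cast congrArg (fun w : ℤ => (w : ℝ)) h4
  have htR : (mZ : ℝ) * p - j = q * t := by
    exact_mod_cast congrArg (fun w : ℤ => (w : ℝ)) ht
  have key : x - (mZ : ℝ) * z - ((-t : ℤ) : ℝ) = (x - (j : ℝ) / q) - (mZ : ℝ) * ε / q := by
    have hzq : z = ((p : ℝ) + ε) / q := by field_simp [hεdef]; linear_combination -hεdef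
    rw [hzq]
    push_cast
    field_simp
    ring_nf
    ring_nf at htR
    linarith
  have hb := nint_le (x - (mZ : ℝ) * z) (-t)
  rw [key] at hb
  rw [hmcast]
  refine le_trans hb (le_trans (abs_sub _ _) ?_)
  have e1 : |x - (j : ℝ) / q| ≤ 1 / (2 * (q : ℝ)) := by
    have h5 : x - (j : ℝ) / q = ((q : ℝ) * x - j) / q := by field_simp
    rw [h5, abs_div, abs_of_pos hq0, div_le_div_iff₀ hq0 (by positivity)]
    nlinarith
  have e2 : |(mZ : ℝ) * ε / q| ≤ Bd z (n + 1) := by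
    rw [abs_div, abs_of_pos hq0, abs_mul, div_le_iff₀ hq0]
    have hm1 : (1 : ℝ) ≤ (mZ : ℝ) := by exact_mod_cast hmZ1
    have hm2 : (mZ : ℝ) ≤ (q : ℝ) := by exact_mod_cast hmZq
    have h6 : |(mZ : ℝ)| = (mZ : ℝ) := abs_of_pos (by linarith)
    rw [h6, hε]
    nlinarith [Bd_pos z hz (n + 1)]
  linarith

/-- Dispersion (covering radius) of the first `N` points of the Kronecker
sequence of `z` on the circle: `sup_{x ∈ [0,1)} min_{1 ≤ n ≤ N} ‖x - n z‖`. -/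
noncomputable def dispersion (z : ℝ) (N : ℕ) : ℝ :=
  sSup {v : ℝ | ∃ x : ℝ, 0 ≤ x ∧ x < 1 ∧
    v = sInf {w : ℝ | ∃ n : ℕ, 1 ≤ n ∧ n ≤ N ∧ w = nint (x - (n : ℝ) * z)}}

lemma inner_bddBelow (z x : ℝ) (N : ℕ) :
    BddBelow {w : ℝ | ∃ n : ℕ, 1 ≤ n ∧ n ≤ N ∧ w = nint (x - (n : ℝ) * z)} := by
  refine ⟨0, ?_⟩
  rintro w ⟨n, -, -, rfl⟩
  exact nint_nonneg _

lemma disp_le (z : ℝ) (hz : Irrational z) (n N : ℕ) (hN : qd z (n + 1) ≤ (N : ℤ)) :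
    dispersion z N ≤ 1 / (2 * (qd z (n + 1) : ℝ)) + Bd z (n + 1) := by
  have hq0 := qdR_pos z hz n
  have hc : (0 : ℝ) ≤ 1 / (2 * (qd z (n + 1) : ℝ)) + Bd z (n + 1) := by
    have := Bd_pos z hz (n + 1); positivity
  refine Real.sSup_le ?_ hc
  rintro v ⟨x, hx0, hx1, rfl⟩
  obtain ⟨m, hm1, hm2, hm3⟩ := density z hz n x
  refine csInf_le_of_le (inner_bddBelow z x N) ⟨m, hm1, ?_, rfl⟩ hm3
  exact_mod_cast le_trans hm2 hN

lemma disp_nonneg (z : ℝ) (N : ℕ) (hN : 1 ≤ N) : 0 ≤ dispersion z N := by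
  have hbdd : BddAbove {v : ℝ | ∃ x : ℝ, 0 ≤ x ∧ x < 1 ∧
      v = sInf {w : ℝ | ∃ n : ℕ, 1 ≤ n ∧ n ≤ N ∧ w = nint (x - (n : ℝ) * z)}} := by
    refine ⟨1 / 2, ?_⟩
    rintro v ⟨x, hx0, hx1, rfl⟩
    refine csInf_le_of_le (inner_bddBelow z x N) ⟨N, hN, le_refl N, rfl⟩ ?_
    exact le_trans (nint_le _ (round (x - (N : ℝ) * z))) (abs_sub_round _)
  have hmem : sInf {w : ℝ | ∃ n : ℕ, 1 ≤ n ∧ n ≤ N ∧ w = nint ((0 : ℝ) - (n : ℝ) * z)}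
      ∈ {v : ℝ | ∃ x : ℝ, 0 ≤ x ∧ x < 1 ∧
        v = sInf {w : ℝ | ∃ n : ℕ, 1 ≤ n ∧ n ≤ N ∧ w = nint (x - (n : ℝ) * z)}} :=
    ⟨0, le_refl 0, zero_lt_one, rfl⟩
  refine le_trans ?_ (le_csSup hbdd hmem)
  refine Real.sInf_nonneg ?_
  rintro w ⟨m, -, -, rfl⟩
  exact nint_nonneg _

lemma disp_bound (z : ℝ) (hz : Irrational z) (K : ℕ)
    (hK : ∀ n : ℕ, 1 ≤ n → cfA z n ≤ K) (N : ℕ) (hN : 1 ≤ N) :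
    dispersion z N ≤ 3 * (K + 1) / (2 * N) := by
  classical
  set P : ℕ → Prop := fun n => qd z (n + 1) ≤ (N : ℤ) with hP
  have hP0 : P 0 := by simp [hP, qd]; exact_mod_cast hN
  set n : ℕ := Nat.findGreatest P N with hn
  have hPn : P n := Nat.findGreatest_spec (Nat.zero_le N) hP0
  have hnN : n ≤ N := Nat.findGreatest_le N
  have hsucc : (N : ℤ) < qd z (n + 2) := by
    by_cases h : n + 1 ≤ N
    · have := Nat.findGreatest_is_greatest (Nat.lt_succ_self n) h
      simpa [hP, not_le] using this
    · have hn' : N ≤ n := by omega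
      have := qd_lb z hz (n + 1)
      have : ((n : ℤ) + 1) ≤ qd z (n + 2) := by push_cast at this ⊢; linarith
      omega
  have hgrow : qd z (n + 2) ≤ (K + 1 : ℤ) * qd z (n + 1) := by
    have ha : (cfA z (n + 1) : ℤ) ≤ (K : ℤ) := by exact_mod_cast hK (n + 1) (by omega)
    have hle : qd z n ≤ qd z (n + 1) := qd_le_succ z hz n
    have hq1 : (1 : ℤ) ≤ qd z (n + 1) := (qd_facts z hz n).2
    show (cfA z (n + 1) : ℤ) * qd z (n + 1) + qd z n ≤ (K + 1 : ℤ) * qd z (n + 1)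
    nlinarith
  set q : ℝ := (qd z (n + 1) : ℝ) with hq
  have hq0 : (0 : ℝ) < q := qdR_pos z hz n
  have hNq : (N : ℝ) < (K + 1 : ℝ) * q := by
    have : (N : ℝ) < (qd z (n + 2) : ℝ) := by exact_mod_cast hsucc
    have h2 : ((qd z (n + 2) : ℤ) : ℝ) ≤ (K + 1 : ℝ) * q := by
      rw [hq]; exact_mod_cast hgrow
    linarith
  have hB : Bd z (n + 1) ≤ 1 / q := Bd_le z hz n
  have step1 : dispersion z N ≤ 1 / (2 * q) + 1 / q :=
    le_trans (disp_le z hz n N hPn) (by linarith)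
  have step2 : 1 / (2 * q) + 1 / q = 3 / (2 * q) := by field_simp; ring
  rw [step2] at step1
  refine le_trans step1 ?_
  have hN0 : (0 : ℝ) < (N : ℝ) := by exact_mod_cast hN
  rw [div_le_div_iff₀ (by positivity) (by positivity)]
  nlinarith

theorem stmt10 (z : ℝ) (hz : Irrational z) (K : ℕ)
    (hK : ∀ n : ℕ, 1 ≤ n → cfA z n ≤ K)
    (α : ℝ) (hα0 : 0 < α) (hα1 : α < 1) :
    Filter.Tendsto (fun N : ℕ => (N : ℝ) ^ α * dispersion z N)
      Filter.atTop (nhds 0) := by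
  set C : ℝ := 3 * (K + 1) / 2 with hC
  have hg : Filter.Tendsto (fun N : ℕ => C * (N : ℝ) ^ (α - 1))
      Filter.atTop (nhds 0) := by
    have h1 : Filter.Tendsto (fun x : ℝ => x ^ (α - 1)) Filter.atTop (nhds 0) := by
      have := tendsto_rpow_neg_atTop (y := 1 - α) (by linarith)
      simpa [neg_sub] using this
    have h2 := (h1.comp (tendsto_natCast_atTop_atTop (R := ℝ))).const_mul C
    simpa using h2
  refine squeeze_zero' ?_ ?_ hg
  · filter_upwards [Filter.eventually_ge_atTop 1] with N hN
    exact mul_nonneg (Real.rpow_nonneg (Nat.cast_nonneg N) α) (disp_nonneg z N hN)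
  · filter_upwards [Filter.eventually_ge_atTop 1] with N hN
    have hN0 : (0 : ℝ) < (N : ℝ) := by exact_mod_cast hN
    have hd := disp_bound z hz K hK N hN
    have h3 : (N : ℝ) ^ α * dispersion z N ≤ (N : ℝ) ^ α * (3 * (K + 1) / (2 * N)) :=
      mul_le_mul_of_nonneg_left hd (Real.rpow_nonneg (Nat.cast_nonneg N) α)
    refine le_trans h3 (le_of_eq ?_)
    have hsub : (N : ℝ) ^ (α - 1) = (N : ℝ) ^ α / (N : ℝ) := by
      rw [Real.rpow_sub hN0, Real.rpow_one]
    rw [hsub, hC]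
    field_simp
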